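/- Let 𝒜 be a unital C*-algebra, τ₁ and τ₂ be states on 𝒜, and f, g : ℝ → ℝ be continuous synchronous functions. Then for all self-adjoint elements A, B of 𝒜, τ₂(f(A)g(A)) + f(τ₁(B))·g(τ₁(B)) ≥ τ₂(f(A))·g(τ₁(B)) + f(τ₁(B))·τ₂(g(A)), where τ₁(B) denotes the (real) value of the state τ₁ at the self-adjoint element B. -/

import Mathlib

open scoped ComplexOrder

/-- Chebyshev type inequality for two states and synchronous functions on `ℝ`:
`τ₂(f(A)g(A)) + f(τ₁(B))g(τ₁(B)) ≥ τ₂(f(A))g(τ₁(B)) + f(τ₁(B))τ₂(g(A))`. -/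
theorem chebyshev_two_states_sync {𝒜 : Type*} [CStarAlgebra 𝒜] [PartialOrder 𝒜]
    [StarOrderedRing 𝒜] (τ₁ τ₂ : 𝒜 →ₗ[ℂ] ℂ) (hτ₁one : τ₁ 1 = 1) (hτ₂one : τ₂ 1 = 1)
    (hτ₁pos : ∀ a : 𝒜, 0 ≤ a → 0 ≤ τ₁ a) (hτ₂pos : ∀ a : 𝒜, 0 ≤ a → 0 ≤ τ₂ a)
    (f g : ℝ → ℝ) (hfc : Continuous f) (hgc : Continuous g)
    (hsync : ∀ s t : ℝ, 0 ≤ (f t - f s) * (g t - g s))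
    (A B : 𝒜) (hA : IsSelfAdjoint A) (hB : IsSelfAdjoint B) :
    (τ₂ (cfc f A * cfc g A)).re + f ((τ₁ B).re) * g ((τ₁ B).re) ≥
      (τ₂ (cfc f A)).re * g ((τ₁ B).re) + f ((τ₁ B).re) * (τ₂ (cfc g A)).re := by
  set c : ℝ := (τ₁ B).re with hc
  have key : (0:𝒜) ≤ cfc (fun t => (f t - f c) * (g t - g c)) A :=
    cfc_nonneg fun x _ => hsync c x
  have heq : cfc (fun t => (f t - f c) * (g t - g c)) A
      = cfc f A * cfc g A - algebraMap ℝ 𝒜 (g c) * cfc f A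
        - algebraMap ℝ 𝒜 (f c) * cfc g A + algebraMap ℝ 𝒜 (f c * g c) := by
    rw [cfc_mul (fun t => f t - f c) (fun t => g t - g c) A (hfc.sub continuous_const).continuousOn
      (hgc.sub continuous_const).continuousOn,
      cfc_sub _ _ A hfc.continuousOn continuousOn_const,
      cfc_sub _ _ A hgc.continuousOn continuousOn_const,
      cfc_const (f c) A hA, cfc_const (g c) A hA,
      sub_mul, mul_sub, mul_sub, ← Algebra.commutes (g c) (cfc f A), ← map_mul]
    abel
  have ht : ∀ (r : ℝ) (x : 𝒜), τ₂ (algebraMap ℝ 𝒜 r * x) = (r : ℂ) * τ₂ x := by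
    intro r x
    rw [← Algebra.smul_def, LinearMap.map_smul_of_tower, Complex.real_smul]
  have hpos := hτ₂pos _ key
  rw [heq] at hpos
  have h1 : τ₂ (algebraMap ℝ 𝒜 (f c * g c)) = ((f c * g c : ℝ) : ℂ) := by
    have := ht (f c * g c) 1
    rwa [mul_one, hτ₂one, mul_one] at this
  simp only [map_add, map_sub, ht, h1] at hpos
  rw [Complex.le_def] at hpos
  obtain ⟨hre, -⟩ := hpos
  simp only [Complex.zero_re, Complex.add_re, Complex.sub_re, Complex.mul_re,
    Complex.ofReal_re, Complex.ofReal_im, zero_mul, sub_zero] at hre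
  push_cast at hre
  nlinarith [hre]
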